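/- arXiv:2103.01430 — 4 statements merged into one kernel-verified Lean document; each statement's English description precedes it below -/
import Mathlib

section
/- Every finitely generated equationally Noetherian group is Hopfian, i.e., every surjective endomorphism of the group is an isomorphism. -/
/-- The algebraic set over `G` defined by the system of equations `S`. -/
def algSet (G : Type*) [Group G] {ℓ : ℕ} (S : Set (FreeGroup (Fin ℓ))) :
    Set (Fin ℓ → G) :=
  {g | ∀ s ∈ S, FreeGroup.lift g s = 1}

/-- `G` is equationally Noetherian: every system of equations is equivalent to a
finite subsystem. -/
def EquationallyNoetherian (G : Type*) [Group G] : Prop :=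
  ∀ (ℓ : ℕ) (S : Set (FreeGroup (Fin ℓ))), ∃ S₀ : Set (FreeGroup (Fin ℓ)),
    S₀ ⊆ S ∧ S₀.Finite ∧ algSet G S₀ = algSet G S

/-- Iterates of an endomorphism, as a monoid hom. -/
def iterHom {G : Type*} [Group G] (f : G →* G) : ℕ → G →* G
  | 0 => MonoidHom.id G
  | n + 1 => f.comp (iterHom f n)

theorem iterHom_succ_apply {G : Type*} [Group G] (f : G →* G) (n : ℕ) (x : G) :
    iterHom f (n + 1) x = f (iterHom f n x) := rfl

theorem iterHom_surjective {G : Type*} [Group G] (f : G →* G)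
    (hf : Function.Surjective f) : ∀ n, Function.Surjective (iterHom f n)
  | 0 => Function.surjective_id
  | n + 1 => hf.comp (iterHom_surjective f hf n)

theorem iterHom_mono {G : Type*} [Group G] (f : G →* G) {m n : ℕ} (h : m ≤ n)
    {x : G} (hx : iterHom f m x = 1) : iterHom f n x = 1 := by
  induction n with
  | zero => obtain rfl := Nat.le_zero.mp h; exact hx
  | succ n ih =>
    rcases Nat.lt_or_ge m (n + 1) with h' | h'
    · rw [iterHom_succ_apply, ih (Nat.lt_succ_iff.mp h'), map_one]
    · have : m = n + 1 := le_antisymm h h'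
      rwa [← this]

/-- every finitely generated equationally Noetherian group is
Hopfian: every surjective endomorphism is an isomorphism. -/
theorem hopfian_of_equationallyNoetherian {G : Type*} [Group G]
    (hfg : Group.FG G) (hEN : EquationallyNoetherian G) :
    ∀ f : G →* G, Function.Surjective f → Function.Bijective f := by
  intro f hsurj
  refine ⟨?_, hsurj⟩
  -- generators
  obtain ⟨T, hT⟩ := Group.fg_def.mp hfg
  set ℓ := T.card with hℓ
  set g : Fin ℓ → G := fun i => (T.equivFin.symm i : G) with hg
  have hrange : Set.range g = (T : Set G) := by
    have h1 : Set.range g = Set.range (Subtype.val : T → G) :=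
      Function.Surjective.range_comp T.equivFin.symm.surjective Subtype.val
    rw [h1]
    ext y
    simp
  set π : FreeGroup (Fin ℓ) →* G := FreeGroup.lift g with hπ
  have hπsurj : Function.Surjective π := by
    rw [← MonoidHom.range_eq_top, hπ, FreeGroup.range_lift_eq_closure, hrange]
    exact hT
  -- the chain of systems
  set Sn : ℕ → Set (FreeGroup (Fin ℓ)) := fun n => {w | iterHom f n (π w) = 1} with hSn
  set S : Set (FreeGroup (Fin ℓ)) := ⋃ n, Sn n with hS
  obtain ⟨S₀, hS₀S, hS₀fin, halg⟩ := hEN ℓ S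
  -- S₀ is contained in some Sn N
  have hmono : ∀ {m n : ℕ}, m ≤ n → Sn m ⊆ Sn n := fun h w hw => iterHom_mono f h hw
  have hexN : ∃ N, S₀ ⊆ Sn N := by
    obtain ⟨I, hIfin, hI⟩ := Set.finite_subset_iUnion hS₀fin hS₀S
    rcases hIfin.bddAbove with ⟨N, hN⟩
    refine ⟨N, fun w hw => ?_⟩
    obtain ⟨n, hnI, hn⟩ := Set.mem_iUnion₂.mp (hI hw)
    exact hmono (hN hnI) hn
  obtain ⟨N, hS₀N⟩ := hexN
  -- the tuple fⁿ ∘ g is in algSet (Sn N), hence in algSet S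
  have hkeyhom : (iterHom f N).comp π = FreeGroup.lift (iterHom f N ∘ g) := by
    apply FreeGroup.ext_hom
    intro x
    simp [hπ]
  have hkey : ∀ w : FreeGroup (Fin ℓ), FreeGroup.lift (iterHom f N ∘ g) w
      = iterHom f N (π w) := fun w => (DFunLike.congr_fun hkeyhom w).symm
  have hb : (iterHom f N ∘ g) ∈ algSet G (Sn N) := by
    intro w hw
    rw [hkey]
    exact hw
  have hb₀ : (iterHom f N ∘ g) ∈ algSet G S₀ := fun w hw => hb w (hS₀N hw)
  have hbS : (iterHom f N ∘ g) ∈ algSet G S := halg ▸ hb₀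
  -- injectivity
  rw [injective_iff_map_eq_one]
  intro x hx
  obtain ⟨y, hy⟩ := iterHom_surjective f hsurj N x
  obtain ⟨w, hw⟩ := hπsurj y
  have hwS : w ∈ Sn (N + 1) := by
    show iterHom f (N + 1) (π w) = 1
    rw [hw, iterHom_succ_apply, hy, hx]
  have : FreeGroup.lift (iterHom f N ∘ g) w = 1 :=
    hbS w (Set.mem_iUnion.mpr ⟨N + 1, hwS⟩)
  rw [hkey, hw, hy] at this
  exact this
end

section
/- Basic factoring principle: Let {g_n : F → G} be a sequence of surjective homomorphisms from a finitely generated free group F to an equationally Noetherian group G, and suppose the sequence is stable with stable kernel K, giving the limit quotient η : F → L = F/K. Then for all sufficiently large n, g_n factors through η, i.e., there exists a homomorphism h_n : L → G with h_n ∘ η = g_n. -/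
open Filter

/-- basic factoring principle for equationally Noetherian groups. -/
theorem factor_through_limit {G L : Type*} [Group G] [Group L]
    (hEN : EquationallyNoetherian G) (ℓ : ℕ)
    (g : ℕ → (FreeGroup (Fin ℓ) →* G))
    (hsurj : ∀ n, Function.Surjective (g n))
    (hstab : ∀ w : FreeGroup (Fin ℓ),
      (∀ᶠ n in atTop, g n w = 1) ∨ (∀ᶠ n in atTop, g n w ≠ 1))
    (η : FreeGroup (Fin ℓ) →* L) (hη : Function.Surjective η)
    (hker : ∀ w : FreeGroup (Fin ℓ), (η w = 1 ↔ ∀ᶠ n in atTop, g n w = 1)) :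
    ∀ᶠ n in atTop, ∃ h : L →* G, h.comp η = g n := by
  obtain ⟨S₀, hS₀sub, hS₀fin, hS₀eq⟩ := hEN ℓ {w | η w = 1}
  -- eventually all of S₀ is killed
  have hev : ∀ᶠ n in atTop, ∀ w ∈ S₀, g n w = 1 := by
    have : ∀ w ∈ S₀, ∀ᶠ n in atTop, g n w = 1 := fun w hw =>
      (hker w).mp (hS₀sub hw)
    simpa using (hS₀fin.eventually_all).2 this
  filter_upwards [hev] with n hn
  -- the tuple of generator images lies in algSet G S₀ hence algSet G S
  have hlift : ∀ w : FreeGroup (Fin ℓ),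
      FreeGroup.lift (fun i => g n (FreeGroup.of i)) w = g n w := by
    intro w
    have : FreeGroup.lift (fun i => g n (FreeGroup.of i)) = g n := by
      apply FreeGroup.ext_hom
      intro i
      simp
    rw [this]
  have hmem : (fun i => g n (FreeGroup.of i)) ∈ algSet G S₀ := by
    intro s hs
    rw [hlift]
    exact hn s hs
  rw [hS₀eq] at hmem
  -- so ker η ≤ ker (g n)
  have hle : η.ker ≤ (g n).ker := by
    intro w hw
    have : η w = 1 := hw
    have := hmem w this
    rwa [hlift] at this
  -- lift through η using a right inverse
  obtain ⟨s, hs⟩ := hη.hasRightInverse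
  refine ⟨η.liftOfRightInverse s hs ⟨g n, hle⟩, ?_⟩
  exact η.liftOfRightInverse_comp s hs ⟨g n, hle⟩
end

section
/- Growth-tightness obstruction: Let H be a finitely generated group that is growth-tight (for every surjective non-injective endomorphism h : H → H and every finite generating set S, e(H,S) > e(H, h(S))). If H is non-Hopfian, then the infimum e(H) = inf_S e(H,S) is not attained by any finite generating set; in particular ξ(H) has no minimum and is not well-ordered. -/
open Filter

/-- The ball of radius `n` in the word metric on `G` with respect to the
finite set `S`: products of at most `n` elements of `S ∪ S⁻¹`. -/
def wordBall {G : Type*} [Group G] (S : Finset G) (n : ℕ) : Set G :=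
  {g | ∃ l : List G, l.length ≤ n ∧ (∀ x ∈ l, x ∈ S ∨ x⁻¹ ∈ S) ∧ l.prod = g}

/-- The exponential growth rate `e(G,S) = lim_n |B_n(G,S)|^{1/n}`
(implemented as a `limsup`, which agrees with the limit since the limit exists). -/
noncomputable def growthRate {G : Type*} [Group G] (S : Finset G) : ℝ :=
  Filter.limsup (fun n : ℕ => (Nat.card ↥(wordBall S n) : ℝ) ^ (1 / (n : ℝ))) Filter.atTop

lemma closure_image_top {H : Type*} [Group H] [DecidableEq H] (f : H →* H)
    (hf : Function.Surjective f) (S : Finset H)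
    (hS : Subgroup.closure (S : Set H) = ⊤) :
    Subgroup.closure ((S.image f : Finset H) : Set H) = ⊤ := by
  rw [Finset.coe_image, ← MonoidHom.map_closure, hS]
  rw [← MonoidHom.range_eq_map, MonoidHom.range_eq_top]
  exact hf

/-- a finitely generated growth-tight non-Hopfian group does not
attain its infimal growth rate; in particular `ξ(H)` has no minimum and is not
well-ordered. -/
theorem growth_tight_not_wellordered {H : Type*} [Group H] [DecidableEq H]
    (hfg : Group.FG H)
    (htight : ∀ f : H →* H, Function.Surjective f → ¬ Function.Injective f →
      ∀ S : Finset H, Subgroup.closure (S : Set H) = ⊤ →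
        growthRate (S.image f) < growthRate S)
    (hnonhopf : ∃ f : H →* H, Function.Surjective f ∧ ¬ Function.Injective f) :
    (∀ S : Finset H, Subgroup.closure (S : Set H) = ⊤ →
      ∃ T : Finset H, Subgroup.closure (T : Set H) = ⊤ ∧
        growthRate T < growthRate S) ∧
    ¬ Set.IsWF {r : ℝ | ∃ S : Finset H,
        Subgroup.closure (S : Set H) = ⊤ ∧ growthRate S = r} := by
  obtain ⟨f, hsurj, hninj⟩ := hnonhopf
  have key : ∀ S : Finset H, Subgroup.closure (S : Set H) = ⊤ →
      ∃ T : Finset H, Subgroup.closure (T : Set H) = ⊤ ∧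
        growthRate T < growthRate S := by
    intro S hS
    exact ⟨S.image f, closure_image_top f hsurj S hS, htight f hsurj hninj S hS⟩
  refine ⟨key, ?_⟩
  intro hwf
  obtain ⟨S₀, hS₀⟩ := hfg
  have hne : {r : ℝ | ∃ S : Finset H,
      Subgroup.closure (S : Set H) = ⊤ ∧ growthRate S = r}.Nonempty :=
    ⟨growthRate S₀, S₀, hS₀, rfl⟩
  obtain ⟨S, hS, hSr⟩ := hwf.min_mem hne
  obtain ⟨T, hT, hlt⟩ := key S hS
  have hmem : growthRate T ∈ {r : ℝ | ∃ S : Finset H,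
      Subgroup.closure (S : Set H) = ⊤ ∧ growthRate S = r} := ⟨T, hT, rfl⟩
  exact hwf.not_lt_min hne hmem (hSr ▸ hlt)
end

section
/- Let G be a finitely presented group, N ◁ G a finite normal subgroup, q : G → G' = G/N the quotient map, and {S_k} a family of finite generating sets of G all of cardinality ℓ with S'_k = q(S_k). If the family {S'_k} is finite up to the action of Aut(G'), then {S_k} is finite up to the action of Aut(G). -/
/-- `G` is finitely presented: a quotient of a finitely generated free group by
the normal closure of a finite set of relations. -/
def FinitelyPresentedGroup (G : Type*) [Group G] : Prop :=
  ∃ (n : ℕ) (T : Finset (FreeGroup (Fin n))),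
    Nonempty ((FreeGroup (Fin n) ⧸
      Subgroup.normalClosure (T : Set (FreeGroup (Fin n)))) ≃* G)

namespace LiftingAux
open Function

/-- B.H. Neumann's lemma: if a group `H` has one presentation on finitely many
generators with a kernel that is a normal closure of a finite set, then the kernel of
any surjection from a finitely generated free group onto `H` is the normal closure
of a finite set. -/
theorem ker_eq_ncl_of_surjective {H : Type*} [Group H] {n ℓ : ℕ}
    (p₁ : FreeGroup (Fin n) →* H) (p : FreeGroup (Fin ℓ) →* H)
    (h₁ : Surjective p₁) (h : Surjective p) (T : Finset (FreeGroup (Fin n)))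
    (hker : p₁.ker = Subgroup.normalClosure (T : Set (FreeGroup (Fin n)))) :
    ∃ s : Finset (FreeGroup (Fin ℓ)),
      p.ker = Subgroup.normalClosure (s : Set (FreeGroup (Fin ℓ))) := by
  classical
  choose u hu using fun i : Fin ℓ => h₁ (p (FreeGroup.of i))
  choose v hv using fun j : Fin n => h (p₁ (FreeGroup.of j))
  set α : FreeGroup (Fin ℓ) →* FreeGroup (Fin n) := FreeGroup.lift u with hα
  set β : FreeGroup (Fin n) →* FreeGroup (Fin ℓ) := FreeGroup.lift v with hβ
  have hpα : p₁.comp α = p := FreeGroup.ext_hom _ _ (by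
    intro a; simp [hα, hu])
  have hpβ : p.comp β = p₁ := FreeGroup.ext_hom _ _ (by
    intro a; simp [hβ, hv])
  refine ⟨T.image β ∪ Finset.univ.image
    (fun i : Fin ℓ => (FreeGroup.of i)⁻¹ * β (α (FreeGroup.of i))), ?_⟩
  set s : Finset (FreeGroup (Fin ℓ)) := T.image β ∪ Finset.univ.image
    (fun i : Fin ℓ => (FreeGroup.of i)⁻¹ * β (α (FreeGroup.of i))) with hs
  set M : Subgroup (FreeGroup (Fin ℓ)) := Subgroup.normalClosure (↑s) with hM
  haveI : M.Normal := Subgroup.normalClosure_normal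
  apply le_antisymm
  · -- ker p ≤ M
    have hstep : ∀ x : FreeGroup (Fin ℓ), x⁻¹ * β (α x) ∈ M := by
      intro x
      induction x with
      | C1 => simpa using M.one_mem
      | of i =>
          apply Subgroup.subset_normalClosure
          show ((FreeGroup.of i)⁻¹ * β (α (FreeGroup.of i))) ∈ (↑s : Set _)
          rw [hs]
          exact Finset.mem_coe.2 (Finset.mem_union_right _
            (Finset.mem_image_of_mem _ (Finset.mem_univ i)))
      | inv_of i hi =>
          have key : ((FreeGroup.of i : FreeGroup (Fin ℓ))⁻¹)⁻¹ * β (α (FreeGroup.of i)⁻¹)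
              = (FreeGroup.of i) * ((FreeGroup.of i)⁻¹ * β (α (FreeGroup.of i)))⁻¹ * (FreeGroup.of i)⁻¹ := by
            simp [map_inv]; group
          rw [key]
          exact Subgroup.Normal.conj_mem ‹M.Normal› _ (M.inv_mem hi) _
      | mul a b ha hb =>
          have key : (a * b)⁻¹ * β (α (a * b))
              = (b⁻¹ * (a⁻¹ * β (α a)) * b) * (b⁻¹ * β (α b)) := by
            simp [map_mul]; group
          rw [key]
          refine M.mul_mem ?_ hb
          have := Subgroup.Normal.conj_mem ‹M.Normal› _ ha b⁻¹
          simpa using this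
    intro w hw
    have hαw : α w ∈ p₁.ker := by
      have : p₁ (α w) = p w := by rw [← hpα]; rfl
      simp only [MonoidHom.mem_ker] at hw ⊢
      rw [this, hw]
    have hβαw : β (α w) ∈ M := by
      haveI : (M.comap β).Normal := Subgroup.Normal.comap ‹M.Normal› β
      have hle : Subgroup.normalClosure (T : Set (FreeGroup (Fin n))) ≤ M.comap β := by
        apply Subgroup.normalClosure_le_normal
        intro r hr
        apply Subgroup.subset_normalClosure
        rw [hs]
        simp only [Finset.coe_union, Set.mem_union, Finset.coe_image]
        exact Or.inl ⟨r, hr, rfl⟩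
      have := hle (hker ▸ hαw)
      exact this
    have hw2 : w = β (α w) * (w⁻¹ * β (α w))⁻¹ := by group
    rw [hw2]
    exact M.mul_mem hβαw (M.inv_mem (hstep w))
  · -- M ≤ ker p
    apply Subgroup.normalClosure_le_normal
    intro x hx
    rw [hs] at hx
    simp only [Finset.coe_union, Set.mem_union, Finset.coe_image, Set.mem_image,
      Finset.mem_coe, Finset.mem_univ, true_and] at hx
    rcases hx with ⟨r, hr, rfl⟩ | ⟨i, rfl⟩
    · have hrker : r ∈ p₁.ker := hker ▸ Subgroup.subset_normalClosure hr
      have h2 : p (β r) = p₁ r := by rw [← hpβ]; rfl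
      simp only [MonoidHom.mem_ker] at hrker
      simp only [SetLike.mem_coe, MonoidHom.mem_ker, h2, hrker]
    · have h1 : p (β (α (FreeGroup.of i))) = p (FreeGroup.of i) := by
        have e1 : p (β (α (FreeGroup.of i))) = p₁ (α (FreeGroup.of i)) := by
          rw [← hpβ]; rfl
        have e2 : p₁ (α (FreeGroup.of i)) = p (FreeGroup.of i) := by
          rw [← hpα]; rfl
        rw [e1, e2]
      simp only [SetLike.mem_coe, MonoidHom.mem_ker, map_mul, map_inv, h1]
      group


theorem exists_presentation_quotient {G : Type*} [Group G] (hfp : FinitelyPresentedGroup G)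
    (N : Subgroup G) [N.Normal] [Finite N] :
    ∃ (n : ℕ) (p₁ : FreeGroup (Fin n) →* G ⧸ N), Surjective p₁ ∧
      ∃ s : Finset (FreeGroup (Fin n)),
        p₁.ker = Subgroup.normalClosure (s : Set (FreeGroup (Fin n))) := by
  classical
  obtain ⟨n, T, ⟨e⟩⟩ := hfp
  set eh : (FreeGroup (Fin n) ⧸ Subgroup.normalClosure (T : Set (FreeGroup (Fin n)))) →* G :=
    e.toMonoidHom with heh
  set mkT : FreeGroup (Fin n) →*
      (FreeGroup (Fin n) ⧸ Subgroup.normalClosure (T : Set (FreeGroup (Fin n)))) :=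
    QuotientGroup.mk' _ with hmkT
  set f : (FreeGroup (Fin n) ⧸ Subgroup.normalClosure (T : Set (FreeGroup (Fin n)))) →* G ⧸ N :=
    (QuotientGroup.mk' N).comp eh with hf
  refine ⟨n, f.comp mkT, ?_, ?_⟩
  · exact ((QuotientGroup.mk'_surjective N).comp e.surjective).comp
      (QuotientGroup.mk'_surjective _)
  · set P : Subgroup _ := f.ker with hP
    have hPN : P = N.comap eh := by
      rw [hP, hf, ← MonoidHom.comap_ker, QuotientGroup.ker_mk']
    haveI hPfin : Finite P := by
      rw [hPN]
      refine Finite.of_injective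
        (fun x : Subgroup.comap eh N => (⟨eh x.1, x.2⟩ : N)) ?_
      intro a b hab
      simp only [Subtype.mk.injEq, heh, MulEquiv.coe_toMonoidHom] at hab
      exact Subtype.ext (e.injective hab)
    have hmks : Surjective mkT := QuotientGroup.mk'_surjective _
    choose lft hlft using fun x : P => hmks (x : _)
    have hLfin : (Set.range lft).Finite := Set.finite_range lft
    refine ⟨T ∪ hLfin.toFinset, ?_⟩
    have hkercomp : (f.comp mkT).ker = P.comap mkT := (MonoidHom.comap_ker f mkT).symm
    rw [hkercomp]
    apply le_antisymm
    · intro w hw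
      simp only [Subgroup.mem_comap] at hw
      set y : P := ⟨mkT w, hw⟩ with hy
      have h1 : mkT (w * (lft y)⁻¹) = 1 := by
        rw [map_mul, map_inv, hlft y]; simp [hy]
      have h2 : w * (lft y)⁻¹ ∈ Subgroup.normalClosure (T : Set (FreeGroup (Fin n))) := by
        have hker' : w * (lft y)⁻¹ ∈ mkT.ker := h1
        rwa [hmkT, QuotientGroup.ker_mk'] at hker'
      have h3 : w * (lft y)⁻¹ ∈
          Subgroup.normalClosure (((T ∪ hLfin.toFinset) : Finset _) : Set (FreeGroup (Fin n))) := by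
        refine Subgroup.normalClosure_mono ?_ h2
        intro z hz
        simp only [Finset.coe_union, Set.mem_union]
        exact Or.inl hz
      have h4 : lft y ∈
          Subgroup.normalClosure (((T ∪ hLfin.toFinset) : Finset _) : Set (FreeGroup (Fin n))) := by
        apply Subgroup.subset_normalClosure
        simp only [Finset.coe_union, Set.mem_union, Set.Finite.coe_toFinset, Set.mem_range]
        exact Or.inr ⟨y, rfl⟩
      have h5 := Subgroup.mul_mem _ h3 h4
      simpa using h5
    · haveI : (P.comap mkT).Normal := Subgroup.Normal.comap (by rw [hP]; infer_instance) mkT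
      apply Subgroup.normalClosure_le_normal
      intro x hx
      simp only [Finset.coe_union, Set.mem_union, Set.Finite.coe_toFinset, Finset.mem_coe,
        Set.mem_range] at hx
      rcases hx with hx | ⟨y, rfl⟩
      · have hone : mkT x = 1 := by
          have hxk : x ∈ mkT.ker := by
            rw [hmkT, QuotientGroup.ker_mk']; exact Subgroup.subset_normalClosure hx
          exact hxk
        simp only [SetLike.mem_coe, Subgroup.mem_comap, hone]
        exact P.one_mem
      · simp only [SetLike.mem_coe, Subgroup.mem_comap, hlft y]
        exact y.2


theorem finite_mulAut (N : Type*) [Group N] [Finite N] : Finite (MulAut N) :=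
  Finite.of_injective (fun f => (f : N → N)) DFunLike.coe_injective

theorem finite_range_of_factor {ι X Y : Type*} [Nonempty X] (f : ι → X) (g : ι → Y)
    (hg : (Set.range g).Finite) (h : ∀ k₁ k₂, g k₁ = g k₂ → f k₁ = f k₂) :
    (Set.range f).Finite := by
  classical
  set h' : Y → X := fun y => if hy : ∃ k, g k = y then f hy.choose else Classical.arbitrary X
    with hh'
  have hsub : Set.range f ⊆ h' '' Set.range g := by
    rintro - ⟨k, rfl⟩
    refine ⟨g k, ⟨k, rfl⟩, ?_⟩
    have hy : ∃ k', g k' = g k := ⟨k, rfl⟩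
    rw [hh']
    simp only [dif_pos hy]
    exact h _ _ hy.choose_spec
  exact (hg.image h').subset hsub

theorem ker_eq_of_data {G : Type*} [Group G] (N : Subgroup G) [N.Normal] {ℓ : ℕ}
    (π₁ π₂ : FreeGroup (Fin ℓ) →* G) (R : Set (FreeGroup (Fin ℓ)))
    (hK₁ : ((QuotientGroup.mk' N).comp π₁).ker = Subgroup.normalClosure R)
    (hK₂ : ((QuotientGroup.mk' N).comp π₂).ker = Subgroup.normalClosure R)
    (hc : ∀ i, (MulAut.conjNormal (π₁ (FreeGroup.of i)) : MulAut N)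
      = MulAut.conjNormal (π₂ (FreeGroup.of i)))
    (hv : ∀ r ∈ R, π₁ r = π₂ r) :
    π₁.ker = π₂.ker := by
  classical
  have hmem₁ : ∀ r ∈ R, π₁ r ∈ N := by
    intro r hr
    have h0 : r ∈ ((QuotientGroup.mk' N).comp π₁).ker :=
      hK₁ ▸ Subgroup.subset_normalClosure hr
    simpa [MonoidHom.mem_ker, QuotientGroup.eq_one_iff] using h0
  have hχ : (MulAut.conjNormal : G →* MulAut N).comp π₁
      = (MulAut.conjNormal : G →* MulAut N).comp π₂ :=
    FreeGroup.ext_hom _ _ (fun i => by simpa using hc i)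
  have hagree : ∀ w ∈ Subgroup.normalClosure R, π₁ w = π₂ w := by
    intro w hw
    have hw' : w ∈ Subgroup.closure (Group.conjugatesOfSet R) := hw
    clear hw
    induction hw' using Subgroup.closure_induction with
    | mem x hx =>
        obtain ⟨a, ha, hconj⟩ := Group.mem_conjugatesOfSet_iff.mp hx
        obtain ⟨c, rfl⟩ := isConj_iff.mp hconj
        have h1 : π₁ a ∈ N := hmem₁ a ha
        have h2 : π₂ a ∈ N := hv a ha ▸ h1
        have e1 : π₁ (c * a * c⁻¹)
            = ((MulAut.conjNormal (π₁ c) (⟨π₁ a, h1⟩ : N) : N) : G) := by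
          simp [MulAut.conjNormal_apply]
        have e2 : π₂ (c * a * c⁻¹)
            = ((MulAut.conjNormal (π₂ c) (⟨π₂ a, h2⟩ : N) : N) : G) := by
          simp [MulAut.conjNormal_apply]
        rw [e1, e2]
        have hcc : (MulAut.conjNormal (π₁ c) : MulAut N) = MulAut.conjNormal (π₂ c) := by
          have h3 := DFunLike.congr_fun hχ c
          simpa using h3
        rw [hcc]
        have hab : (⟨π₁ a, h1⟩ : N) = ⟨π₂ a, h2⟩ := Subtype.ext (hv a ha)
        rw [hab]
    | one => simp
    | mul x y hx hy ihx ihy => simp [map_mul, ihx, ihy]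
    | inv x hx ih => simp [map_inv, ih]
  have hsub : ∀ (π : FreeGroup (Fin ℓ) →* G),
      ((QuotientGroup.mk' N).comp π).ker = Subgroup.normalClosure R →
        π.ker ≤ Subgroup.normalClosure R := by
    intro π hK x hx
    rw [← hK]
    simp only [MonoidHom.mem_ker] at hx ⊢
    simp [hx]
  ext x
  simp only [MonoidHom.mem_ker]
  constructor
  · intro h1
    have hxcl : x ∈ Subgroup.normalClosure R := hsub π₁ hK₁ h1
    rw [← hagree x hxcl, h1]
  · intro h2
    have hxcl : x ∈ Subgroup.normalClosure R := hsub π₂ hK₂ h2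
    rw [hagree x hxcl, h2]

end LiftingAux

/-- lifting lemma: if the images in `G' = G/N` of a family of
generating `ℓ`-tuples of `G` are finite up to `Aut(G')`, then the family is
finite up to `Aut(G)`. -/
theorem lifting_lemma {G : Type*} [Group G] (hfp : FinitelyPresentedGroup G)
    (N : Subgroup G) [N.Normal] [Finite N] {ι : Type*} (ℓ : ℕ)
    (S : ι → Fin ℓ → G)
    (hgen : ∀ k, Subgroup.closure (Set.range (S k)) = ⊤)
    (hquot : ∃ t : Finset (Fin ℓ → G ⧸ N), ∀ k, ∃ T ∈ t,
      ∃ φ : (G ⧸ N) ≃* (G ⧸ N),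
        (fun i => φ (T i)) = fun i => QuotientGroup.mk' N (S k i)) :
    ∃ t : Finset (Fin ℓ → G), ∀ k, ∃ T ∈ t,
      ∃ φ : G ≃* G, (fun i => φ (T i)) = S k := by
  classical
  obtain ⟨t, ht⟩ := hquot
  set q : G →* G ⧸ N := QuotientGroup.mk' N with hq
  set π : ι → (FreeGroup (Fin ℓ) →* G) := fun k => FreeGroup.lift (S k) with hπdef
  have hsurj : ∀ k, Function.Surjective (π k) := by
    intro k
    rw [← MonoidHom.range_eq_top, hπdef, FreeGroup.range_lift_eq_closure, hgen k]
  obtain ⟨n, p₁, hp₁, T₁, hkerp₁⟩ := LiftingAux.exists_presentation_quotient hfp N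
  have hqsurj : Function.Surjective q := QuotientGroup.mk'_surjective N
  have hKncl : ∀ k, ∃ s : Finset (FreeGroup (Fin ℓ)),
      (q.comp (π k)).ker = Subgroup.normalClosure (s : Set (FreeGroup (Fin ℓ))) := fun k =>
    LiftingAux.ker_eq_ncl_of_surjective p₁ (q.comp (π k)) hp₁
      (hqsurj.comp (hsurj k)) T₁ hkerp₁
  set R : Subgroup (FreeGroup (Fin ℓ)) → Finset (FreeGroup (Fin ℓ)) := fun K =>
    if h : ∃ s : Finset (FreeGroup (Fin ℓ)),
        K = Subgroup.normalClosure (s : Set (FreeGroup (Fin ℓ))) then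
      h.choose else ∅ with hRdef
  have hRspec : ∀ K : Subgroup (FreeGroup (Fin ℓ)),
      (∃ s : Finset (FreeGroup (Fin ℓ)),
        K = Subgroup.normalClosure (s : Set (FreeGroup (Fin ℓ)))) →
      K = Subgroup.normalClosure ((R K : Finset (FreeGroup (Fin ℓ))) : Set (FreeGroup (Fin ℓ))) := by
    intro K h
    rw [hRdef]
    simp only [dif_pos h]
    exact h.choose_spec
  set K' : ι → Subgroup (FreeGroup (Fin ℓ)) := fun k => (q.comp (π k)).ker with hK'def
  have hK'ncl : ∀ k, K' k = Subgroup.normalClosure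
      ((R (K' k) : Finset (FreeGroup (Fin ℓ))) : Set (FreeGroup (Fin ℓ))) := by
    intro k
    refine hRspec _ ?_
    obtain ⟨s, hs⟩ := hKncl k
    exact ⟨s, hs⟩
  haveI : Finite (MulAut N) := LiftingAux.finite_mulAut N
  set D : ι → Subgroup (FreeGroup (Fin ℓ)) × (Fin ℓ → MulAut N) × (FreeGroup (Fin ℓ) → G) :=
    fun k => (K' k,
      fun i => MulAut.conjNormal (π k (FreeGroup.of i)),
      fun w => if w ∈ R (K' k) then π k w else 1) with hDdef
  have hdet : ∀ k₁ k₂, D k₁ = D k₂ → (π k₁).ker = (π k₂).ker := by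
    intro k₁ k₂ hEq
    rw [hDdef] at hEq
    simp only [Prod.mk.injEq] at hEq
    obtain ⟨h1, h2, h3⟩ := hEq
    have hB : (q.comp (π k₂)).ker = Subgroup.normalClosure
        ((R (K' k₁) : Finset (FreeGroup (Fin ℓ))) : Set (FreeGroup (Fin ℓ))) := by
      rw [h1]; exact hK'ncl k₂
    refine LiftingAux.ker_eq_of_data N (π k₁) (π k₂)
      ((R (K' k₁) : Finset (FreeGroup (Fin ℓ))) : Set (FreeGroup (Fin ℓ)))
      (hK'ncl k₁) hB (fun i => congrFun h2 i) ?_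
    intro r hr
    have hr' : r ∈ R (K' k₁) := hr
    have h3' := congrFun h3 r
    rw [← h1] at h3'
    simpa only [if_pos hr'] using h3'
  have hDfin : (Set.range D).Finite := by
    set C : Set (Subgroup (FreeGroup (Fin ℓ))) :=
      (fun T' : Fin ℓ → G ⧸ N => (FreeGroup.lift T').ker) '' ↑t with hCdef
    have hCfin : C.Finite := t.finite_toSet.image _
    set W : Subgroup (FreeGroup (Fin ℓ)) → Set (FreeGroup (Fin ℓ) → G) := fun K =>
      Set.range (fun u : { x // x ∈ R K } → N =>
        fun w => if hw : w ∈ R K then ((u ⟨w, hw⟩ : G)) else 1) with hWdef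
    have hWfin : ∀ K, (W K).Finite := fun K => Set.finite_range _
    have hsubset : Set.range D ⊆ ⋃ K ∈ C, ({K} ×ˢ (Set.univ ×ˢ W K)) := by
      rintro - ⟨k, rfl⟩
      have hKC : K' k ∈ C := by
        obtain ⟨T, hT, φ, hφ⟩ := ht k
        refine ⟨T, hT, ?_⟩
        have hcomp : q.comp (π k) = φ.toMonoidHom.comp (FreeGroup.lift T) := by
          refine (FreeGroup.ext_hom _ _ ?_).symm
          intro a
          have h5 := congrFun hφ a
          simp only [MonoidHom.comp_apply, MulEquiv.coe_toMonoidHom, FreeGroup.lift_apply_of] at h5 ⊢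
          rw [h5]
          simp [hπdef]
        have hker2 : (φ.toMonoidHom.comp (FreeGroup.lift T)).ker = (FreeGroup.lift T).ker := by
          ext x
          simp only [MonoidHom.mem_ker, MonoidHom.comp_apply, MulEquiv.coe_toMonoidHom]
          constructor
          · intro hxx
            have h7 := φ.injective (hxx.trans (map_one φ).symm)
            simpa using h7
          · intro hxx; rw [hxx, map_one]
        show (FreeGroup.lift T).ker = K' k
        rw [← hker2, ← hcomp]
      refine Set.mem_biUnion hKC ?_
      have hval : ∀ w, w ∈ R (K' k) → π k w ∈ N := by
        intro w hw
        have hwK : w ∈ (q.comp (π k)).ker := by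
          have h8 : w ∈ K' k := by
            rw [hK'ncl k]
            exact Subgroup.subset_normalClosure (Finset.mem_coe.mpr hw)
          exact h8
        rw [MonoidHom.mem_ker, MonoidHom.comp_apply] at hwK
        rw [hq] at hwK
        rwa [QuotientGroup.mk'_apply, QuotientGroup.eq_one_iff] at hwK
      refine Set.mem_prod.mpr ⟨rfl, Set.mem_prod.mpr ⟨Set.mem_univ _, ?_⟩⟩
      refine ⟨fun x => ⟨π k x.1, hval x.1 x.2⟩, ?_⟩
      funext w
      by_cases hw : w ∈ R (K' k)
      · simp [hw, hDdef]
      · simp [hw, hDdef]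
    refine Set.Finite.subset ?_ hsubset
    refine Set.Finite.biUnion hCfin ?_
    intro K _
    exact (Set.finite_singleton _).prod (Set.finite_univ.prod (hWfin K))
  haveI : Nonempty (Subgroup (FreeGroup (Fin ℓ))) := ⟨⊥⟩
  have hkerfin : (Set.range (fun k => (π k).ker)).Finite :=
    LiftingAux.finite_range_of_factor _ D hDfin hdet
  set rep : Subgroup (FreeGroup (Fin ℓ)) → (Fin ℓ → G) := fun K =>
    if h : ∃ k, (π k).ker = K then S h.choose else fun _ => 1 with hrepdef
  refine ⟨hkerfin.toFinset.image rep, ?_⟩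
  intro k
  have hmem : (π k).ker ∈ hkerfin.toFinset := by
    rw [Set.Finite.mem_toFinset]; exact ⟨k, rfl⟩
  refine ⟨rep ((π k).ker), Finset.mem_image_of_mem _ hmem, ?_⟩
  have hx : ∃ k', (π k').ker = (π k).ker := ⟨k, rfl⟩
  have hrep : rep ((π k).ker) = S hx.choose := by rw [hrepdef]; simp only [dif_pos hx]
  have hk₀ : (π hx.choose).ker = (π k).ker := hx.choose_spec
  set e : (j : ι) → (FreeGroup (Fin ℓ) ⧸ (π j).ker) ≃* G := fun j =>
    MulEquiv.ofBijective (QuotientGroup.kerLift (π j))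
      ⟨QuotientGroup.kerLift_injective _, fun g => by
        obtain ⟨x, hxg⟩ := hsurj j g
        exact ⟨QuotientGroup.mk x, by rw [QuotientGroup.kerLift_mk]; exact hxg⟩⟩ with hedef
  refine ⟨(e hx.choose).symm.trans ((QuotientGroup.quotientMulEquivOfEq hk₀).trans (e k)), ?_⟩
  rw [hrep]
  funext i
  simp only [MulEquiv.trans_apply]
  have hs0 : S hx.choose i = π hx.choose (FreeGroup.of i) := by
    simp [hπdef]
  have h4 : (e hx.choose).symm (S hx.choose i) = QuotientGroup.mk (FreeGroup.of i) := by
    rw [hs0, MulEquiv.symm_apply_eq, hedef]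
    simp only [MulEquiv.ofBijective_apply]
    exact (QuotientGroup.kerLift_mk (π hx.choose) (FreeGroup.of i)).symm
  rw [h4, QuotientGroup.quotientMulEquivOfEq_mk, hedef]
  simp only [MulEquiv.ofBijective_apply]
  refine (QuotientGroup.kerLift_mk (π k) (FreeGroup.of i)).trans ?_
  simp [hπdef]
end
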